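/- arXiv:2402.14567 — 4 statements merged into one kernel-verified Lean document; each statement's English description precedes it below -/
import Mathlib

section
/- For every time t and all μOPs q ≤ q', if q and q' are both in-flight at time t, then q' − q < R. (Paper's Lemma 'Distance of in-flight μOPs': two simultaneously in-flight μOPs are fewer than R positions apart in decode order.) -/
/-- Paper's Lemma "Distance of in-flight μOPs": in a reorder buffer of
capacity `R ≥ 1`, with `decode` and `retire` times satisfying the ROB axioms,
two μOPs `q ≤ q'` that are both in-flight at a common time `t`
(`decode _ ≤ t < retire _`) are fewer than `R` positions apart. -/
theorem inflight_distance_lt_rob_size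
    (R : ℕ) (hR : 1 ≤ R)
    (decode retire : ℕ → ℕ)
    (h_dec_ret : ∀ q, decode q < retire q)
    (h_ret_mono : ∀ q q', q ≤ q' → retire q ≤ retire q')
    (h_dec_mono : ∀ q q', q ≤ q' → decode q ≤ decode q')
    (h_cap : ∀ q, retire q ≤ decode (q + R))
    (t q q' : ℕ) (hqq' : q ≤ q')
    (h_inflight_q : decode q ≤ t ∧ t < retire q)
    (h_inflight_q' : decode q' ≤ t ∧ t < retire q') :
    q' - q < R := by
  by_contra h
  push_neg at h
  have h1 : q + R ≤ q' := by omega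
  have : retire q ≤ t :=
    le_trans (le_trans (h_cap q) (h_dec_mono _ _ h1)) h_inflight_q'.1
  omega
end

section
/- Let h : ℕ → ℕ be strictly monotone (assigning to each executed instruction the index of one of its decoded μOPs, injectively and in increasing order). For all instructions p ≤ p' and every time t, if the μOPs h p and h p' are both in-flight at time t, then p' − p < R: two instructions with simultaneously in-flight μOPs are fewer than R instructions apart. (Instruction-level form of the paper's Lemma 'Distance of in-flight μOPs'.) -/
/-- Instruction-level form of the paper's Lemma "Distance of in-flight μOPs":
with `h : ℕ → ℕ` strictly monotone mapping each executed instruction to one of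
its decoded μOPs, if the μOPs `h p` and `h p'` (with `p ≤ p'`) are both
in-flight at a common time `t`, then the instructions are fewer than `R`
instructions apart: `p' - p < R`. -/
theorem instruction_inflight_distance_lt_rob_size
    (R : ℕ) (hR : 1 ≤ R)
    (decode retire : ℕ → ℕ)
    (h_dec_ret : ∀ q, decode q < retire q)
    (h_ret_mono : ∀ q q', q ≤ q' → retire q ≤ retire q')
    (h_dec_mono : ∀ q q', q ≤ q' → decode q ≤ decode q')
    (h_cap : ∀ q, retire q ≤ decode (q + R))
    (h : ℕ → ℕ) (h_mono : StrictMono h)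
    (p p' t : ℕ) (hpp' : p ≤ p')
    (h_inflight_p : decode (h p) ≤ t ∧ t < retire (h p))
    (h_inflight_p' : decode (h p') ≤ t ∧ t < retire (h p')) :
    p' - p < R := by
  have hq : h p' < h p + R := by
    by_contra hge
    push_neg at hge
    have : retire (h p) ≤ t :=
      le_trans (h_cap (h p)) (le_trans (h_dec_mono _ _ hge) h_inflight_p'.1)
    exact absurd h_inflight_p.2 (not_lt.mpr this)
  have hdiff : h p + (p' - p) ≤ h p' := by
    have key : ∀ k, h p + k ≤ h (p + k) := by
      intro k; induction k with
      | zero => simp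
      | succ n ih =>
        have : h (p + n) < h (p + (n + 1)) := h_mono (by omega)
        omega
    have := key (p' - p)
    rwa [Nat.add_sub_cancel' hpp'] at this
  omega
end

section
/- Suppose the issue of μOP q is delayed at time t only if (1) q is not yet decoded at t (t < decode q), or (2) some μOP q₀ with dep q₀ q is not yet retired at t (t < retire q₀), or (3) no suitable execution port for q is free at t. Then for every μOP q and time t, if decode q ≤ t, a suitable port for q is free at time t, and every μOP q₀ with dep q₀ q satisfies q₀ + R ≤ q, the issue of q is not delayed at time t. (Paper's Theorem 'Long distance dependencies': a dependency between two instructions separated by at least R μOPs can be ignored.) -/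
/-- Paper's Theorem "Long distance dependencies": under the issue-delay law
(a μOP's issue is delayed only if it is not yet decoded, or it depends on a
not-yet-retired μOP, or no suitable port is free), a μOP `q` that is decoded,
has a free port, and all of whose dependencies reach at least `R` μOPs back,
is not delayed: such long-distance dependencies can be ignored. -/
theorem long_distance_dependencies_no_delay
    (R : ℕ) (hR : 1 ≤ R)
    (decode retire : ℕ → ℕ)
    (h_dec_ret : ∀ q, decode q < retire q)
    (h_ret_mono : ∀ q q', q ≤ q' → retire q ≤ retire q')
    (h_dec_mono : ∀ q q', q ≤ q' → decode q ≤ decode q')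
    (h_cap : ∀ q, retire q ≤ decode (q + R))
    (dep : ℕ → ℕ → Prop)
    (h_dep_lt : ∀ q₀ q, dep q₀ q → q₀ < q)
    (portFree : ℕ → ℕ → Prop)
    (delayed : ℕ → ℕ → Prop)
    (h_delay_law : ∀ t q, delayed t q →
      t < decode q ∨ (∃ q₀, dep q₀ q ∧ t < retire q₀) ∨ ¬ portFree t q)
    (q t : ℕ)
    (h_decoded : decode q ≤ t)
    (h_port : portFree t q)
    (h_far : ∀ q₀, dep q₀ q → q₀ + R ≤ q) :
    ¬ delayed t q := by
  intro hd
  rcases h_delay_law t q hd with h | ⟨q₀, hdep, hret⟩ | hp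
  · omega
  · have := (h_cap q₀).trans (h_dec_mono _ _ (h_far q₀ hdep))
    omega
  · exact hp h_port
end

section
/- For every time t, the set of μOPs that are in-flight at time t is finite and has cardinality at most R: the reorder buffer never holds more than R μOPs simultaneously. -/
/-- In the abstract ROB model of capacity `R ≥ 1`, at every time `t` the set
of μOPs in-flight at `t` (`decode q ≤ t < retire q`) is finite with at most
`R` elements: the reorder buffer never holds more than `R` μOPs at once. -/
theorem inflight_set_finite_card_le_rob_size
    (R : ℕ) (hR : 1 ≤ R)
    (decode retire : ℕ → ℕ)
    (h_dec_ret : ∀ q, decode q < retire q)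
    (h_ret_mono : ∀ q q', q ≤ q' → retire q ≤ retire q')
    (h_dec_mono : ∀ q q', q ≤ q' → decode q ≤ decode q')
    (h_cap : ∀ q, retire q ≤ decode (q + R))
    (t : ℕ) :
    {q : ℕ | decode q ≤ t ∧ t < retire q}.Finite ∧
      {q : ℕ | decode q ≤ t ∧ t < retire q}.ncard ≤ R := by
  set S := {q : ℕ | decode q ≤ t ∧ t < retire q} with hS
  by_cases hne : ∃ q, q ∈ S
  · classical
    obtain ⟨q, hq⟩ := hne
    have hq0 := Nat.find_spec ⟨q, hq⟩
    set q0 := Nat.find ⟨q, hq⟩ with hq0def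
    have hsub : S ⊆ Set.Ico q0 (q0 + R) := by
      intro x hx
      refine ⟨Nat.find_min' _ hx, ?_⟩
      by_contra h
      push_neg at h
      have h1 : retire q0 ≤ decode x :=
        le_trans (h_cap q0) (h_dec_mono _ _ h)
      exact absurd (lt_of_lt_of_le hq0.2 (le_trans h1 hx.1)) (lt_irrefl t)
    have hfin : S.Finite := (Set.finite_Ico _ _).subset hsub
    refine ⟨hfin, ?_⟩
    calc S.ncard ≤ (Set.Ico q0 (q0 + R)).ncard :=
          Set.ncard_le_ncard hsub (Set.finite_Ico _ _)
      _ = R := by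
          simp [Set.ncard_eq_toFinset_card', Set.toFinset_Ico]
  · push_neg at hne
    have : S = ∅ := Set.eq_empty_iff_forall_notMem.mpr hne
    simp [this]
end
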